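/- Under the stated assumptions on (r_n), one has sup_{x ∈ B_1} | [∫_{‖x−y‖_p ≤ r_n} g(‖x−y‖_p/r_n) ρ(y) dy] / (m_0 r_n^d ρ(x)) − 1 | → 0 as n → ∞; that is, ∫_{‖x−y‖_p ≤ r_n} g(‖x−y‖_p/r_n) ρ(y) dy = m_0 r_n^d ρ(x)(1 + o(1)) uniformly for x ∈ B_1. -/

import Mathlib

open MeasureTheory ProbabilityTheory Filter
open scoped ENNReal NNReal BigOperators

/-- The ℓ^p norm on `ℝ^d`, for `p ∈ [1,∞]` (encoded as `p : ℝ≥0∞`). -/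
noncomputable def lpNormR {d : ℕ} (p : ℝ≥0∞) (x : Fin d → ℝ) : ℝ :=
  if p = ∞ then ⨆ i, |x i| else (∑ i, |x i| ^ p.toReal) ^ (1 / p.toReal)

/-- The Gaussian weight `ρ(x) = exp(-∑ x_i²/(2σ_i²))`. -/
noncomputable def gaussWeight {d : ℕ} (σ : Fin d → ℝ) (x : Fin d → ℝ) : ℝ :=
  Real.exp (-(∑ i, x i ^ 2 / (2 * σ i ^ 2)))

/-- The product Gaussian measure `N_d(0, diag(σ_1²,…,σ_d²))` on `ℝ^d`. -/
noncomputable def gaussPi (d : ℕ) (σ : Fin d → ℝ) : Measure (Fin d → ℝ) :=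
  Measure.pi fun i => gaussianReal 0 (Real.toNNReal (σ i ^ 2))

/-- The moment constant `m_l = ∫_{ℝ^d} |u_1|^l 1(‖u‖_p ≤ 1) g(‖u‖_p) du`. -/
noncomputable def mmt (d : ℕ) (hd : 0 < d) (p : ℝ≥0∞) (g : ℝ → ℝ) (l : ℕ) : ℝ :=
  ∫ u : Fin d → ℝ,
    if lpNormR p u ≤ 1 then |u ⟨0, hd⟩| ^ l * g (lpNormR p u) else 0

/-- The affinity matrix `K(i,j) = 1(‖x_i-x_j‖_p ≤ r) g(‖x_i-x_j‖_p/r)`. -/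
noncomputable def affK {d n : ℕ} (p : ℝ≥0∞) (g : ℝ → ℝ) (r : ℝ)
    (x : Fin n → Fin d → ℝ) : Matrix (Fin n) (Fin n) ℝ :=
  Matrix.of fun i j =>
    if lpNormR p (x i - x j) ≤ r then g (lpNormR p (x i - x j) / r) else 0

/-- The scaled random-walk Laplacian `L = (2m_0/(m_2 r²)) (I - D⁻¹K)`. -/
noncomputable def lapL {d n : ℕ} (hd : 0 < d) (p : ℝ≥0∞) (g : ℝ → ℝ) (r : ℝ)
    (x : Fin n → Fin d → ℝ) : Matrix (Fin n) (Fin n) ℝ :=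
  (2 * mmt d hd p g 0 / (mmt d hd p g 2 * r ^ 2)) •
    (1 - Matrix.of fun i j => affK p g r x i j / ∑ l, affK p g r x i l)

/-- The eigenvalues of a matrix (real roots of the characteristic polynomial,
with multiplicity), sorted in non-decreasing order. -/
noncomputable def sortedEigs {n : ℕ} (A : Matrix (Fin n) (Fin n) ℝ) : List ℝ :=
  Multiset.sort (Matrix.charpoly A).roots (· ≤ ·)

/-- The number of eigenvalues (real roots of the characteristic polynomial, with
multiplicity) that are `≤ δ`. -/
noncomputable def eigCountLE {n : ℕ} (A : Matrix (Fin n) (Fin n) ℝ) (δ : ℝ) : ℕ :=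
  Multiset.card (Multiset.filter (fun t => t ≤ δ) (Matrix.charpoly A).roots)

/-- The `m`-th physicist's Hermite polynomial `H_m(x) = (-1)^m e^{x²} (d/dx)^m e^{-x²}`. -/
noncomputable def physHermite (m : ℕ) (x : ℝ) : ℝ :=
  (-1 : ℝ) ^ m * Real.exp (x ^ 2) * iteratedDeriv m (fun t => Real.exp (-t ^ 2)) x

/-- The sigmoid function `s(t) = (1+e^{-t})⁻¹`. -/
noncomputable def sigmoid (t : ℝ) : ℝ := (1 + Real.exp (-t))⁻¹

/-- The smoothed affinity matrix `K̃(i,j) = s(α(r²-‖x_i-x_j‖_p²)) g*(‖x_i-x_j‖_p/r)`. -/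
noncomputable def affKs {d n : ℕ} (p : ℝ≥0∞) (gs : ℝ → ℝ) (α r : ℝ)
    (x : Fin n → Fin d → ℝ) : Matrix (Fin n) (Fin n) ℝ :=
  Matrix.of fun i j =>
    sigmoid (α * (r ^ 2 - lpNormR p (x i - x j) ^ 2)) * gs (lpNormR p (x i - x j) / r)

/-- The smoothed scaled random-walk Laplacian `L̃ = (2m_0/(m_2 r²)) (I - D̃⁻¹K̃)`. -/
noncomputable def lapLs {d n : ℕ} (hd : 0 < d) (p : ℝ≥0∞) (g gs : ℝ → ℝ) (α r : ℝ)
    (x : Fin n → Fin d → ℝ) : Matrix (Fin n) (Fin n) ℝ :=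
  (2 * mmt d hd p g 0 / (mmt d hd p g 2 * r ^ 2)) •
    (1 - Matrix.of fun i j => affKs p gs α r x i j / ∑ l, affKs p gs α r x i l)

/-- The ℓ²→ℓ² operator norm of a real square matrix. -/
noncomputable def matOpNorm {n : ℕ} (A : Matrix (Fin n) (Fin n) ℝ) : ℝ :=
  ‖Matrix.toEuclideanCLM (𝕜 := ℝ) A‖

/-- The weighted L² norm `‖f‖_F = (∫ f(x)² ρ(x)² dx)^{1/2}`. -/
noncomputable def Fnorm {d : ℕ} (σ : Fin d → ℝ) (f : (Fin d → ℝ) → ℝ) : ℝ :=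
  (∫ x : Fin d → ℝ, f x ^ 2 * gaussWeight σ x ^ 2) ^ ((1 : ℝ) / 2)

/-- Partial derivative `∂f/∂x_i`. -/
noncomputable def pd {d : ℕ} (i : Fin d) (f : (Fin d → ℝ) → ℝ) : (Fin d → ℝ) → ℝ :=
  fun x => fderiv ℝ f x (Pi.single i 1)

/-- The weighted Laplace–Beltrami operator
`Δ_ρ f(x) = -∑ ∂²f/∂x_i²(x) + ∑ (2x_i/σ_i²) ∂f/∂x_i(x)`. -/
noncomputable def deltaRho {d : ℕ} (σ : Fin d → ℝ) (f : (Fin d → ℝ) → ℝ) :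
    (Fin d → ℝ) → ℝ :=
  fun x => -(∑ i, pd i (pd i f) x) + ∑ i, (2 * x i / σ i ^ 2) * pd i f x

/-- The deterministic integral operator `T_r` (Tn). -/
noncomputable def Tn {d : ℕ} (hd : 0 < d) (p : ℝ≥0∞) (σ : Fin d → ℝ) (g : ℝ → ℝ)
    (r : ℝ) (f : (Fin d → ℝ) → ℝ) (x : Fin d → ℝ) : ℝ :=
  (2 / (r ^ (d + 2) * mmt d hd p g 2 * gaussWeight σ x)) *
    ∫ y : Fin d → ℝ,
      if lpNormR p (x - y) ≤ r then
        g (lpNormR p (x - y) / r) * (f x - f y) * gaussWeight σ y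
      else 0

/-- The intermediate operator `T̃_r`. -/
noncomputable def TtildeOp {d : ℕ} (hd : 0 < d) (p : ℝ≥0∞) (σ : Fin d → ℝ)
    (g : ℝ → ℝ) (r : ℝ) (f : (Fin d → ℝ) → ℝ) (x : Fin d → ℝ) : ℝ :=
  (2 * mmt d hd p g 0 / (mmt d hd p g 2 * r ^ 2)) *
    (∫ y : Fin d → ℝ,
      if lpNormR p (x - y) ≤ r then
        g (lpNormR p (x - y) / r) * (f x - f y) * gaussWeight σ y
      else 0) /
    (∫ y : Fin d → ℝ,
      if lpNormR p (x - y) ≤ r then g (lpNormR p (x - y) / r) * gaussWeight σ y else 0)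

/-- The empirical operator `L̃_n`. -/
noncomputable def empOp {d n : ℕ} (hd : 0 < d) (p : ℝ≥0∞) (g gs : ℝ → ℝ) (α r : ℝ)
    (x : Fin n → Fin d → ℝ) (f : (Fin d → ℝ) → ℝ) (y : Fin d → ℝ) : ℝ :=
  (2 * mmt d hd p g 0 / (mmt d hd p g 2 * r ^ 2)) *
    (∑ j, sigmoid (α * (r ^ 2 - lpNormR p (y - x j) ^ 2)) *
        gs (lpNormR p (y - x j) / r) * (f y - f (x j))) /
    (∑ j, sigmoid (α * (r ^ 2 - lpNormR p (y - x j) ^ 2)) *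
        gs (lpNormR p (y - x j) / r))

lemma lpNormR_nonneg {d : ℕ} (p : ℝ≥0∞) (x : Fin d → ℝ) : 0 ≤ lpNormR p x := by
  unfold lpNormR
  split
  · exact Real.iSup_nonneg fun i => abs_nonneg _
  · exact Real.rpow_nonneg (Finset.sum_nonneg fun i _ => Real.rpow_nonneg (abs_nonneg _) _) _

lemma toReal_one_le {p : ℝ≥0∞} (hp : 1 ≤ p) (hp' : p ≠ ∞) : 1 ≤ p.toReal := by
  simpa using ENNReal.toReal_mono hp' hp

lemma lpNormR_measurable {d : ℕ} (p : ℝ≥0∞) : Measurable (lpNormR (d := d) p) := by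
  unfold lpNormR
  split
  · exact Measurable.iSup fun i => (measurable_pi_apply i).abs
  · apply Measurable.pow_const
    exact Finset.measurable_sum _ fun i _ => ((measurable_pi_apply i).abs).pow_const _

lemma abs_le_lpNormR {d : ℕ} {p : ℝ≥0∞} (hp : 1 ≤ p) (x : Fin d → ℝ) (i : Fin d) :
    |x i| ≤ lpNormR p x := by
  unfold lpNormR
  split
  · exact le_ciSup (f := fun j => |x j|) (Set.Finite.bddAbove (Set.finite_range _)) i
  · rename_i hp'
    have ht : 1 ≤ p.toReal := toReal_one_le hp hp'
    have ht0 : 0 < p.toReal := lt_of_lt_of_le one_pos ht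
    have h1 : |x i| = (|x i| ^ p.toReal) ^ (1 / p.toReal) := by
      rw [← Real.rpow_mul (abs_nonneg _), mul_one_div, div_self ht0.ne', Real.rpow_one]
    rw [h1]
    apply Real.rpow_le_rpow (Real.rpow_nonneg (abs_nonneg _) _) _ (by positivity)
    exact Finset.single_le_sum (fun j _ => Real.rpow_nonneg (abs_nonneg _) _) (Finset.mem_univ i)

lemma lpNormR_smul {d : ℕ} {p : ℝ≥0∞} (hp : 1 ≤ p) {c : ℝ} (hc : 0 ≤ c) (x : Fin d → ℝ) :
    lpNormR p (c • x) = c * lpNormR p x := by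
  unfold lpNormR
  split
  · simp only [Pi.smul_apply, smul_eq_mul, abs_mul, abs_of_nonneg hc]
    exact (Real.mul_iSup_of_nonneg hc _).symm
  · rename_i hp'
    have ht : 1 ≤ p.toReal := toReal_one_le hp hp'
    have ht0 : 0 < p.toReal := lt_of_lt_of_le one_pos ht
    have : ∀ i, |(c • x) i| ^ p.toReal = c ^ p.toReal * |x i| ^ p.toReal := by
      intro i
      simp only [Pi.smul_apply, smul_eq_mul, abs_mul, abs_of_nonneg hc]
      exact Real.mul_rpow hc (abs_nonneg _)
    simp_rw [this, ← Finset.mul_sum]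
    rw [Real.mul_rpow (Real.rpow_nonneg hc _)
      (Finset.sum_nonneg fun i _ => Real.rpow_nonneg (abs_nonneg _) _),
      ← Real.rpow_mul hc, mul_one_div, div_self ht0.ne', Real.rpow_one]

lemma lpNormR_le_one_of_small {d : ℕ} (hd : 0 < d) {p : ℝ≥0∞} (hp : 1 ≤ p)
    (x : Fin d → ℝ) (hx : ∀ i, |x i| ≤ 1 / d) : lpNormR p x ≤ 1 := by
  have hd1 : (1:ℝ) ≤ d := by exact_mod_cast hd
  have hdpos : (0:ℝ) < d := lt_of_lt_of_le one_pos hd1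
  have hinv : (0:ℝ) < 1 / d := by positivity
  have hinv1 : (1:ℝ) / d ≤ 1 := by
    rw [div_le_one hdpos]; exact hd1
  unfold lpNormR
  split
  · haveI : Nonempty (Fin d) := ⟨⟨0, hd⟩⟩
    exact ciSup_le fun i => (hx i).trans hinv1
  · rename_i hp'
    have ht : 1 ≤ p.toReal := toReal_one_le hp hp'
    have ht0 : (0:ℝ) < p.toReal := lt_of_lt_of_le one_pos ht
    have hsum : ∑ i, |x i| ^ p.toReal ≤ 1 := by
      calc ∑ i, |x i| ^ p.toReal ≤ ∑ _i : Fin d, (1/d:ℝ) ^ p.toReal :=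
            Finset.sum_le_sum fun i _ =>
              Real.rpow_le_rpow (abs_nonneg _) (hx i) ht0.le
        _ = d * (1/d:ℝ) ^ p.toReal := by simp [mul_comm]
        _ ≤ d * (1/d:ℝ) := by
            have := Real.rpow_le_rpow_of_exponent_ge hinv hinv1 ht
            rw [Real.rpow_one] at this
            exact mul_le_mul_of_nonneg_left this hdpos.le
        _ = 1 := by field_simp
    exact Real.rpow_le_one (Finset.sum_nonneg fun i _ => Real.rpow_nonneg (abs_nonneg _) _)
      hsum (by positivity)

lemma gaussWeight_pos {d : ℕ} (σ x : Fin d → ℝ) : 0 < gaussWeight σ x := Real.exp_pos _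

lemma gaussWeight_le_one {d : ℕ} (σ x : Fin d → ℝ) : gaussWeight σ x ≤ 1 := by
  rw [gaussWeight, Real.exp_le_one_iff, neg_nonpos]
  exact Finset.sum_nonneg fun i _ => by positivity

lemma gaussWeight_sub {d : ℕ} {σ : Fin d → ℝ} (hσ : ∀ i, 0 < σ i) (x v : Fin d → ℝ) :
    gaussWeight σ (x - v) =
      gaussWeight σ x * Real.exp (∑ i, (2 * x i * v i - v i ^ 2) / (2 * σ i ^ 2)) := by
  rw [gaussWeight, gaussWeight, ← Real.exp_add]
  congr 1
  rw [neg_add_eq_sub, ← Finset.sum_sub_distrib, ← Finset.sum_neg_distrib]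
  apply Finset.sum_congr rfl
  intro i _
  have : (σ i)^2 ≠ 0 := pow_ne_zero _ (hσ i).ne'
  have hxi : (x - v) i = x i - v i := rfl
  rw [hxi]
  field_simp
  ring

lemma abs_exp_sub_one_le (t : ℝ) : |Real.exp t - 1| ≤ Real.exp |t| - 1 := by
  rcases le_or_gt 0 t with h | h
  · rw [abs_of_nonneg h, abs_of_nonneg (by linarith [Real.one_le_exp h])]
  · rw [abs_of_neg h, abs_of_nonpos (by have := (Real.exp_lt_one_iff.mpr h).le; linarith)]
    have h1 : 1 - Real.exp t ≤ -t := by linarith [Real.add_one_le_exp t]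
    have h2 : -t ≤ Real.exp (-t) - 1 := by linarith [Real.add_one_le_exp (-t)]
    linarith

lemma sqrtlog_div_rpow_tendsto (c : ℝ) {ε : ℝ} (hε : 0 < ε) :
    Tendsto (fun n : ℕ => Real.sqrt (c * Real.log n) * (n : ℝ) ^ (-ε)) atTop (nhds 0) := by
  have h1 : Tendsto (fun x : ℝ => c * (Real.log x / x ^ (2 * ε))) atTop (nhds 0) := by
    have := (isLittleO_log_rpow_atTop (by positivity : (0:ℝ) < 2 * ε)).tendsto_div_nhds_zero
    simpa using this.const_mul c
  have h2 : Tendsto (fun n : ℕ => Real.sqrt (c * (Real.log n / (n:ℝ) ^ (2 * ε)))) atTop (nhds 0) := by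
    have := (Real.continuous_sqrt.tendsto 0).comp (h1.comp tendsto_natCast_atTop_atTop)
    simpa [Function.comp_def] using this
  apply h2.congr'
  filter_upwards [eventually_ge_atTop 1] with n hn
  have hn1 : (1:ℝ) ≤ (n:ℝ) := by exact_mod_cast hn
  have hnpos : (0:ℝ) < (n:ℝ) := lt_of_lt_of_le one_pos hn1
  have hrp : (0:ℝ) < (n:ℝ) ^ ε := Real.rpow_pos_of_pos hnpos ε
  have hsq : Real.sqrt ((n:ℝ) ^ (2 * ε)) = (n:ℝ) ^ ε := by
    rw [show (2:ℝ) * ε = ε * 2 by ring, Real.rpow_mul hnpos.le, Real.rpow_two,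
      Real.sqrt_sq hrp.le]
  rw [← mul_div_assoc, Real.sqrt_div' _ (Real.rpow_nonneg hnpos.le _), hsq,
    Real.rpow_neg hnpos.le, div_eq_mul_inv]

lemma eventually_exp_le {d : ℕ} (σ : Fin d → ℝ) {β ε : ℝ} (hβ : 0 < β) (hε : 0 < ε)
    (r : ℕ → ℝ) (hr : ∀ n, 0 < r n)
    (hrup : Tendsto (fun n : ℕ => r n * (n : ℝ) ^ ε) atTop (nhds 0))
    {κ : ℝ} (hκ : 0 < κ) :
    ∀ᶠ n : ℕ in atTop,
      Real.exp (∑ i, (2 * σ i * Real.sqrt (2 * (1 + β) * Real.log n) * r n + r n ^ 2) /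
        (2 * σ i ^ 2)) - 1 ≤ κ := by
  have hr0 : Tendsto r atTop (nhds 0) := by
    apply squeeze_zero' (Eventually.of_forall fun n => (hr n).le) ?_ hrup
    filter_upwards [eventually_ge_atTop 1] with n hn
    have h1 : (1:ℝ) ≤ (n:ℝ) ^ ε := Real.one_le_rpow (by exact_mod_cast hn) hε.le
    nlinarith [hr n]
  have hsl : Tendsto (fun n : ℕ => Real.sqrt (2 * (1 + β) * Real.log n) * r n) atTop (nhds 0) := by
    have hm := hrup.mul (sqrtlog_div_rpow_tendsto (2 * (1 + β)) hε)
    rw [mul_zero] at hm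
    apply hm.congr'
    filter_upwards [eventually_ge_atTop 1] with n hn
    have hnpos : (0:ℝ) < (n:ℝ) := by exact_mod_cast hn
    have : (n:ℝ) ^ ε * (n:ℝ) ^ (-ε) = 1 := by
      rw [Real.rpow_neg hnpos.le, mul_inv_cancel₀ (Real.rpow_pos_of_pos hnpos ε).ne']
    calc r n * (n:ℝ) ^ ε * (Real.sqrt (2 * (1 + β) * Real.log n) * (n:ℝ) ^ (-ε))
        = Real.sqrt (2 * (1 + β) * Real.log n) * r n * ((n:ℝ) ^ ε * (n:ℝ) ^ (-ε)) := by ring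
      _ = Real.sqrt (2 * (1 + β) * Real.log n) * r n := by rw [this, mul_one]
  have hc : Tendsto (fun n : ℕ => ∑ i, (2 * σ i * Real.sqrt (2 * (1 + β) * Real.log n) * r n
      + r n ^ 2) / (2 * σ i ^ 2)) atTop (nhds 0) := by
    have := tendsto_finset_sum (Finset.univ : Finset (Fin d)) (fun i _ => by
      have h1 := hsl.const_mul (2 * σ i)
      have h2 := hr0.mul hr0
      rw [mul_zero] at h1
      rw [mul_zero] at h2
      have := (h1.add h2).div_const (2 * σ i ^ 2)
      rw [add_zero, zero_div] at this
      exact this.congr (fun n => by rw [← pow_two (r n)]))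
    simpa only [Finset.sum_const_zero, mul_assoc] using this
  have hfin : Tendsto (fun n : ℕ => Real.exp (∑ i, (2 * σ i * Real.sqrt (2 * (1 + β) *
      Real.log n) * r n + r n ^ 2) / (2 * σ i ^ 2)) - 1) atTop (nhds 0) := by
    have := ((Real.continuous_exp.tendsto 0).comp hc).sub_const 1
    simpa using this
  exact hfin.eventually (eventually_le_nhds hκ)

set_option maxHeartbeats 1000000 in
/-- Lemma `interror`: uniformly for `x` in the bulk region `B_1`,
`∫_{‖x-y‖_p ≤ r_n} g(‖x-y‖_p/r_n) ρ(y) dy = m_0 r_n^d ρ(x)(1 + o(1))`. -/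
theorem bulk_integral_approximation
    (d : ℕ) (hd : 0 < d) (σ : Fin d → ℝ) (hσ : ∀ i, 0 < σ i)
    (p : ℝ≥0∞) (hp : 1 ≤ p)
    (g : ℝ → ℝ) (hg : ContDiffOn ℝ 2 g (Set.Ici 0))
    (c₁ c₂ : ℝ) (hc₁ : 0 < c₁)
    (hgb : ∀ y ∈ Set.Icc (0 : ℝ) 1, c₁ ≤ g y ∧ g y ≤ c₂)
    (ε : ℝ) (hε : 0 < ε) (hε' : ε < 1 / (2 * ((d : ℝ) + 4)))
    (r : ℕ → ℝ) (hr : ∀ n, 0 < r n)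
    (hrlow : Tendsto (fun n : ℕ => r n * (n : ℝ) ^ ((1 : ℝ) / ((d : ℝ) + 4) - ε)) atTop atTop)
    (hrup : Tendsto (fun n : ℕ => r n * (n : ℝ) ^ ε) atTop (nhds 0))
    (β : ℝ) (hβ : 0 < β)
    (κ : ℝ) (hκ : 0 < κ) :
    ∀ᶠ n : ℕ in atTop, ∀ x : Fin d → ℝ,
      (∀ i, |x i| ≤ σ i * Real.sqrt (2 * (1 + β) * Real.log n)) →
      |(∫ y : Fin d → ℝ,
            if lpNormR p (x - y) ≤ r n then
              g (lpNormR p (x - y) / r n) * gaussWeight σ y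
            else 0) /
          (mmt d hd p g 0 * r n ^ d * gaussWeight σ x) - 1| ≤ κ := by
  classical
  -- the continuous extension of `g`
  set gm : ℝ → ℝ := fun t => g (max t 0) with hgm
  have hgmc : Continuous gm :=
    (hg.continuousOn).comp_continuous (continuous_id.max continuous_const)
      (fun t => Set.mem_Ici.mpr (le_max_right _ _))
  have hgm_eq : ∀ t : ℝ, 0 ≤ t → gm t = g t := fun t ht => by
    simp [hgm, max_eq_left ht]
  -- the normalized kernel
  set G : (Fin d → ℝ) → ℝ := fun u => if lpNormR p u ≤ 1 then gm (lpNormR p u) else 0 with hGdef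
  have hGmeas : Measurable G :=
    Measurable.ite (measurableSet_le (lpNormR_measurable p) measurable_const)
      (hgmc.measurable.comp (lpNormR_measurable p)) measurable_const
  have hGnonneg : ∀ u, 0 ≤ G u := by
    intro u
    simp only [hGdef]
    split
    · rename_i h
      rw [hgm_eq _ (lpNormR_nonneg p u)]
      exact le_of_lt (lt_of_lt_of_le hc₁ (hgb _ ⟨lpNormR_nonneg p u, h⟩).1)
    · exact le_rfl
  have hGle : ∀ u, G u ≤ Set.indicator {u | lpNormR p u ≤ 1} (fun _ => c₂) u := by
    intro u
    simp only [hGdef]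
    by_cases h : lpNormR p u ≤ 1
    · rw [if_pos h, Set.indicator_of_mem (show u ∈ {u : Fin d → ℝ | lpNormR p u ≤ 1} from h), hgm_eq _ (lpNormR_nonneg p u)]
      exact (hgb _ ⟨lpNormR_nonneg p u, h⟩).2
    · rw [if_neg h, Set.indicator_of_notMem (show u ∉ {u : Fin d → ℝ | lpNormR p u ≤ 1} from h)]
  have hSmeas : MeasurableSet {u : Fin d → ℝ | lpNormR p u ≤ 1} :=
    measurableSet_le (lpNormR_measurable p) measurable_const
  have hSfin : volume {u : Fin d → ℝ | lpNormR p u ≤ 1} < ⊤ := by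
    have hsub : {u : Fin d → ℝ | lpNormR p u ≤ 1} ⊆
        Set.pi Set.univ fun _ : Fin d => Set.Icc (-1 : ℝ) 1 := by
      intro u hu i _
      have h := (abs_le_lpNormR hp u i).trans hu
      exact ⟨neg_le_of_abs_le h, le_of_abs_le h⟩
    calc volume {u : Fin d → ℝ | lpNormR p u ≤ 1}
        ≤ volume (Set.pi Set.univ fun _ : Fin d => Set.Icc (-1 : ℝ) 1) := measure_mono hsub
      _ = ∏ _i : Fin d, volume (Set.Icc (-1 : ℝ) 1) := volume_pi_pi _
      _ = (ENNReal.ofReal (1 - (-1)))^(Finset.univ.card : ℕ) := by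
          rw [Finset.prod_const, Real.volume_Icc]
      _ < ⊤ := ENNReal.pow_lt_top ENNReal.ofReal_lt_top
  have hIndInt : Integrable (Set.indicator {u : Fin d → ℝ | lpNormR p u ≤ 1} (fun _ => c₂)) := by
    rw [integrable_indicator_iff hSmeas]
    exact integrableOn_const hSfin.ne
  have hGint : Integrable G := by
    apply hIndInt.mono' hGmeas.aestronglyMeasurable
    filter_upwards with u
    rw [Real.norm_eq_abs, abs_of_nonneg (hGnonneg u)]
    exact hGle u
  have hm0eq : mmt d hd p g 0 = ∫ u, G u := by
    rw [mmt]
    congr 1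
    funext u
    simp only [pow_zero, one_mul, hGdef]
    by_cases h : lpNormR p u ≤ 1
    · rw [if_pos h, if_pos h, hgm_eq _ (lpNormR_nonneg p u)]
    · rw [if_neg h, if_neg h]
  have hm0pos : 0 < mmt d hd p g 0 := by
    rw [hm0eq]
    have hd1 : (0:ℝ) < (d:ℝ) := by exact_mod_cast hd
    set C := Set.pi Set.univ fun _ : Fin d => Set.Icc (-(1/(d:ℝ))) (1/(d:ℝ)) with hCdef
    have hCmeas : MeasurableSet C := MeasurableSet.univ_pi fun i => measurableSet_Icc
    have hCvol : volume C = (ENNReal.ofReal (2/(d:ℝ)))^(d:ℕ) := by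
      rw [hCdef, volume_pi_pi]
      simp only [Real.volume_Icc, Finset.prod_const, Finset.card_univ, Fintype.card_fin]
      norm_num
      ring_nf
    have hCfin : volume C ≠ ⊤ := by
      rw [hCvol]; exact (ENNReal.pow_lt_top ENNReal.ofReal_lt_top).ne
    have hCpos : 0 < (volume C).toReal := by
      rw [hCvol, ENNReal.toReal_pow, ENNReal.toReal_ofReal (by positivity : (0:ℝ) ≤ 2/(d:ℝ))]
      positivity
    have hlow : c₁ * (volume C).toReal ≤ ∫ u in C, G u := by
      refine (le_of_eq ?_).trans (setIntegral_ge_of_const_le (c := c₁) hCmeas hCfin ?_ hGint.integrableOn)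
      · rw [smul_eq_mul, mul_comm]; rfl
      intro u hu
      have hsmall : ∀ i, |u i| ≤ 1/(d:ℝ) := by
        intro i
        have := hu i (Set.mem_univ i)
        exact abs_le.mpr ⟨this.1, this.2⟩
      have hle1 : lpNormR p u ≤ 1 := lpNormR_le_one_of_small hd hp u hsmall
      show c₁ ≤ if lpNormR p u ≤ 1 then gm (lpNormR p u) else 0
      rw [if_pos hle1, hgm_eq _ (lpNormR_nonneg p u)]
      exact (hgb _ ⟨lpNormR_nonneg p u, hle1⟩).1
    have hup : ∫ u in C, G u ≤ ∫ u, G u :=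
      setIntegral_le_integral hGint (Filter.Eventually.of_forall hGnonneg)
    have : 0 < c₁ * (volume C).toReal := by positivity
    linarith
  filter_upwards [eventually_exp_le σ hβ hε r hr hrup hκ] with n hexp
  intro x hx
  have hR : 0 < r n := hr n
  set R := r n with hRdef
  have hRd : (0:ℝ) < R ^ d := by positivity
  have hgwcont : Continuous (gaussWeight σ) := by
    unfold gaussWeight
    apply Real.continuous_exp.comp
    apply Continuous.neg
    exact continuous_finset_sum _ fun i _ => ((continuous_apply i).pow 2).div_const _
  set Frn : (Fin d → ℝ) → ℝ := fun z =>
    if lpNormR p z ≤ R then g (lpNormR p z / R) * gaussWeight σ (x - z) else 0 with hFdef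
  have hA : (∫ y : Fin d → ℝ, if lpNormR p (x - y) ≤ R then
      g (lpNormR p (x - y) / R) * gaussWeight σ y else 0) = ∫ z, Frn z := by
    rw [← integral_sub_left_eq_self Frn volume x]
    congr 1
    funext y
    simp only [hFdef, sub_sub_cancel]
  have hfrk : Module.finrank ℝ (Fin d → ℝ) = d := Module.finrank_fin_fun ℝ
  have hcomp := Measure.integral_comp_smul_of_nonneg (volume : Measure (Fin d → ℝ)) Frn R (hR := hR.le)
  rw [hfrk, smul_eq_mul] at hcomp
  have hB : ∫ z, Frn z = R ^ d * ∫ u, Frn (R • u) := by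
    rw [hcomp]
    field_simp
  set fA : (Fin d → ℝ) → ℝ := fun u => G u * gaussWeight σ (x - R • u) with hfAdef
  have hCeq : ∀ u, Frn (R • u) = fA u := by
    intro u
    show (if lpNormR p (R • u) ≤ R then g (lpNormR p (R • u) / R) * gaussWeight σ (x - R • u)
      else 0) = (if lpNormR p u ≤ 1 then gm (lpNormR p u) else 0) * gaussWeight σ (x - R • u)
    rw [lpNormR_smul hp hR.le]
    by_cases h : lpNormR p u ≤ 1
    · rw [if_pos (by nlinarith [lpNormR_nonneg p u] : R * lpNormR p u ≤ R), if_pos h,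
        mul_div_cancel_left₀ _ hR.ne', hgm_eq _ (lpNormR_nonneg p u)]
    · rw [if_neg (by push_neg; nlinarith [lpNormR_nonneg p u] : ¬ R * lpNormR p u ≤ R),
        if_neg h, zero_mul]
  have hfAmeas : Measurable fA :=
    hGmeas.mul (hgwcont.comp (continuous_const.sub (continuous_id.const_smul R))).measurable
  have hfAint : Integrable fA := by
    apply hIndInt.mono' hfAmeas.aestronglyMeasurable
    filter_upwards with u
    rw [Real.norm_eq_abs, abs_mul, abs_of_nonneg (hGnonneg u),
      abs_of_pos (gaussWeight_pos σ _)]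
    calc G u * gaussWeight σ (x - R • u) ≤ G u * 1 :=
          mul_le_mul_of_nonneg_left (gaussWeight_le_one σ _) (hGnonneg u)
      _ = G u := mul_one _
      _ ≤ _ := hGle u
  have hfBint : Integrable (fun u => G u * gaussWeight σ x) := hGint.mul_const _
  have hkey : ∀ u, lpNormR p u ≤ 1 →
      |gaussWeight σ (x - R • u) - gaussWeight σ x| ≤ κ * gaussWeight σ x := by
    intro u hu
    set v := R • u with hvdef
    have hv : ∀ i, |v i| ≤ R := by
      intro i
      have h1 : |u i| ≤ 1 := (abs_le_lpNormR hp u i).trans hu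
      have h2 : |v i| = R * |u i| := by
        rw [hvdef]
        simp [abs_mul, abs_of_nonneg hR.le]
      rw [h2]
      nlinarith
    rw [gaussWeight_sub hσ]
    set M := Real.sqrt (2 * (1 + β) * Real.log n) with hMdef
    have hMnonneg : 0 ≤ M := Real.sqrt_nonneg _
    set E := ∑ i, (2 * x i * v i - v i ^ 2) / (2 * σ i ^ 2) with hEdef
    have hE : |E| ≤ ∑ i, (2 * σ i * M * R + R ^ 2) / (2 * σ i ^ 2) := by
      refine (Finset.abs_sum_le_sum_abs _ _).trans (Finset.sum_le_sum fun i _ => ?_)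
      have hσi := hσ i
      have h1 : |x i| ≤ σ i * M := hx i
      have h2 : |v i| ≤ R := hv i
      rw [abs_div, abs_of_pos (by positivity : (0:ℝ) < 2 * σ i ^ 2)]
      gcongr
      calc |2 * x i * v i - v i ^ 2| ≤ |2 * x i * v i| + |v i ^ 2| := abs_sub _ _
        _ = 2 * |x i| * |v i| + |v i| ^ 2 := by
            rw [abs_mul, abs_mul, abs_two, abs_pow]
        _ ≤ 2 * σ i * M * R + R ^ 2 := by
            nlinarith [abs_nonneg (x i), abs_nonneg (v i)]
    have habs : |Real.exp E - 1| ≤ κ := by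
      have h1 := abs_exp_sub_one_le E
      have h2 : Real.exp |E| ≤ Real.exp (∑ i, (2 * σ i * M * R + R ^ 2) / (2 * σ i ^ 2)) :=
        Real.exp_le_exp.mpr hE
      have h3 := hexp
      linarith
    have h4 : gaussWeight σ x * Real.exp E - gaussWeight σ x
        = gaussWeight σ x * (Real.exp E - 1) := by ring
    rw [h4, abs_mul, abs_of_pos (gaussWeight_pos σ x), mul_comm κ _]
    exact mul_le_mul_of_nonneg_left habs (gaussWeight_pos σ x).le
  set m₀ := mmt d hd p g 0 with hm₀
  set A := ∫ u, fA u with hAdef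
  have hAB : |A - m₀ * gaussWeight σ x| ≤ κ * (m₀ * gaussWeight σ x) := by
    have h1 : A - m₀ * gaussWeight σ x = ∫ u, (fA u - G u * gaussWeight σ x) := by
      rw [integral_sub hfAint hfBint, integral_mul_const, ← hAdef, hm0eq]
    rw [h1]
    have h2 : |∫ u, (fA u - G u * gaussWeight σ x)| ≤ ∫ u, |fA u - G u * gaussWeight σ x| := by
      have := norm_integral_le_integral_norm (fun u => fA u - G u * gaussWeight σ x) (μ := volume)
      simpa [Real.norm_eq_abs] using this
    have h3 : ∫ u, |fA u - G u * gaussWeight σ x| ≤ ∫ u, κ * gaussWeight σ x * G u := by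
      apply integral_mono ((hfAint.sub hfBint).abs) ((hGint.const_mul _))
      intro u
      dsimp only [Pi.sub_apply]
      by_cases h : lpNormR p u ≤ 1
      · have hG0 := hGnonneg u
        have h5 : fA u - G u * gaussWeight σ x
            = G u * (gaussWeight σ (x - R • u) - gaussWeight σ x) := by
          rw [hfAdef]; ring
        rw [h5, abs_mul, abs_of_nonneg hG0]
        calc G u * |gaussWeight σ (x - R • u) - gaussWeight σ x|
            ≤ G u * (κ * gaussWeight σ x) := mul_le_mul_of_nonneg_left (hkey u h) hG0
          _ = κ * gaussWeight σ x * G u := by ring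
      · have hG0 : G u = 0 := by
          show (if lpNormR p u ≤ 1 then gm (lpNormR p u) else 0) = 0
          rw [if_neg h]
        have h5 : fA u = 0 := by rw [hfAdef]; show G u * _ = 0; rw [hG0, zero_mul]
        rw [h5, hG0]
        simp
    have h4 : ∫ u, κ * gaussWeight σ x * G u = κ * (m₀ * gaussWeight σ x) := by
      rw [integral_const_mul, hm0eq]
      ring
    linarith
  have hAeq : (∫ u, Frn (R • u)) = A := by
    rw [hAdef]
    congr 1
    funext u
    exact hCeq u
  rw [hA, hB, hAeq]
  have hρx := gaussWeight_pos σ x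
  have hdenpos : (0:ℝ) < m₀ * gaussWeight σ x := by positivity
  have hquot : R ^ d * A / (m₀ * R ^ d * gaussWeight σ x) - 1
      = (A - m₀ * gaussWeight σ x) / (m₀ * gaussWeight σ x) := by
    field_simp
  rw [hquot, abs_div, abs_of_pos hdenpos, div_le_iff₀ hdenpos]
  exact hAB
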